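/- If G is a graph on n vertices such that all but t ≥ 1 of its vertices have degree n−1, then the clique partition number cp(G) is less than t·n. -/
import Mathlib


/-- `P` is a clique partition of `G`. -/
def IsCliquePartition {V : Type*} (G : SimpleGraph V) (P : Finset (Finset V)) : Prop :=
  (∀ Q ∈ P, ∀ u ∈ Q, ∀ v ∈ Q, u ≠ v → G.Adj u v) ∧
  (∀ u v : V, G.Adj u v → ∃! Q : Finset V, Q ∈ P ∧ u ∈ Q ∧ v ∈ Q)

/-- If `G` is a graph on `n ≥ 1` vertices such that all but `t ≥ 1` of its
vertices have degree `n - 1`, then `cp(G) < t * n`. -/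
theorem stmt2 (n t : ℕ) (hn : 0 < n) (ht : 1 ≤ t) (G : SimpleGraph (Fin n))
    [DecidableRel G.Adj]
    (h : (Finset.univ.filter fun v : Fin n => G.degree v ≠ n - 1).card ≤ t) :
    ∃ P : Finset (Finset (Fin n)), IsCliquePartition G P ∧ P.card < t * n := by
  classical
  set S : Finset (Fin n) := Finset.univ.filter (fun v : Fin n => G.degree v ≠ n - 1) with hSdef
  -- vertices outside S are universal
  have hdeg : ∀ v : Fin n, v ∉ S → ∀ w, w ≠ v → G.Adj v w := by
    intro v hv w hw
    have hd : G.degree v = n - 1 := by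
      by_contra h'
      exact hv (Finset.mem_filter.mpr ⟨Finset.mem_univ _, h'⟩)
    have hsub : G.neighborFinset v ⊆ Finset.univ.erase v := by
      intro x hx
      simp only [Finset.mem_erase, Finset.mem_univ, and_true]
      intro hxe
      subst hxe
      exact G.irrefl ((SimpleGraph.mem_neighborFinset _ _ _).mp hx)
    have hcard : (Finset.univ.erase v).card ≤ (G.neighborFinset v).card := by
      rw [SimpleGraph.card_neighborFinset_eq_degree, hd,
        Finset.card_erase_of_mem (Finset.mem_univ v)]
      simp
    have heq := Finset.eq_of_subset_of_card_le hsub hcard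
    have hwmem : w ∈ G.neighborFinset v := by
      rw [heq]
      simp [hw]
    exact (SimpleGraph.mem_neighborFinset _ _ _).mp hwmem
  set E : Finset (Finset (Fin n)) :=
    S.biUnion (fun s => (G.neighborFinset s).image (fun w => ({s, w} : Finset (Fin n)))) with hEdef
  set D : Finset (Fin n) := Sᶜ with hDdef
  set P : Finset (Finset (Fin n)) :=
    (if 2 ≤ D.card then ({D} : Finset (Finset (Fin n))) else ∅) ∪ E with hPdef
  have hmemE : ∀ Q ∈ E, ∃ s w, s ∈ S ∧ G.Adj s w ∧ Q = {s, w} := by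
    intro Q hQ
    rw [hEdef, Finset.mem_biUnion] at hQ
    obtain ⟨s, hs, hQ⟩ := hQ
    rw [Finset.mem_image] at hQ
    obtain ⟨w, hw, rfl⟩ := hQ
    exact ⟨s, w, hs, (SimpleGraph.mem_neighborFinset _ _ _).mp hw, rfl⟩
  refine ⟨P, ⟨?_, ?_⟩, ?_⟩
  · -- each element of P is a clique
    intro Q hQ u hu v hv huv
    rw [hPdef, Finset.mem_union] at hQ
    rcases hQ with hQ | hQ
    · have hQD : Q = D := by
        by_cases h2 : 2 ≤ D.card
        · simpa [h2] using hQ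
        · simp [h2] at hQ
      subst hQD
      have hu' : u ∉ S := by simpa [hDdef, Finset.mem_compl] using hu
      exact hdeg u hu' v (Ne.symm huv) |>.symm.symm
    · obtain ⟨s, w, hs, hadj, rfl⟩ := hmemE Q hQ
      simp only [Finset.mem_insert, Finset.mem_singleton] at hu hv
      rcases hu with rfl | rfl <;> rcases hv with rfl | rfl
      · exact absurd rfl huv
      · exact hadj
      · exact hadj.symm
      · exact absurd rfl huv
  · -- every edge in exactly one clique
    intro u v hadj
    have hne : u ≠ v := G.ne_of_adj hadj
    by_cases hu : u ∈ S
    · refine ⟨{u, v}, ⟨?_, ?_, ?_⟩, ?_⟩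
      · rw [hPdef, Finset.mem_union]
        right
        rw [hEdef, Finset.mem_biUnion]
        exact ⟨u, hu, Finset.mem_image.mpr ⟨v, (SimpleGraph.mem_neighborFinset _ _ _).mpr hadj, rfl⟩⟩
      · simp
      · simp
      · rintro Q ⟨hQ, huQ, hvQ⟩
        rw [hPdef, Finset.mem_union] at hQ
        rcases hQ with hQ | hQ
        · exfalso
          have hQD : Q = D := by
            by_cases h2 : 2 ≤ D.card
            · simpa [h2] using hQ
            · simp [h2] at hQ
          rw [hQD, hDdef, Finset.mem_compl] at huQ
          exact huQ hu
        · obtain ⟨s, w, hs, hadj', rfl⟩ := hmemE Q hQ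
          simp only [Finset.mem_insert, Finset.mem_singleton] at huQ hvQ
          rcases huQ with rfl | rfl <;> rcases hvQ with rfl | rfl
          · exact absurd rfl hne
          · rfl
          · exact Finset.pair_comm v u
          · exact absurd rfl hne
    · by_cases hv : v ∈ S
      · refine ⟨{u, v}, ⟨?_, ?_, ?_⟩, ?_⟩
        · rw [hPdef, Finset.mem_union]
          right
          rw [hEdef, Finset.mem_biUnion]
          refine ⟨v, hv, Finset.mem_image.mpr
            ⟨u, (SimpleGraph.mem_neighborFinset _ _ _).mpr hadj.symm, ?_⟩⟩
          exact (Finset.pair_comm u v).symm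
        · simp
        · simp
        · rintro Q ⟨hQ, huQ, hvQ⟩
          rw [hPdef, Finset.mem_union] at hQ
          rcases hQ with hQ | hQ
          · exfalso
            have hQD : Q = D := by
              by_cases h2 : 2 ≤ D.card
              · simpa [h2] using hQ
              · simp [h2] at hQ
            rw [hQD, hDdef, Finset.mem_compl] at hvQ
            exact hvQ hv
          · obtain ⟨s, w, hs, hadj', rfl⟩ := hmemE Q hQ
            simp only [Finset.mem_insert, Finset.mem_singleton] at huQ hvQ
            rcases huQ with rfl | rfl <;> rcases hvQ with rfl | rfl
            · exact absurd rfl hne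
            · rfl
            · exact Finset.pair_comm v u
            · exact absurd rfl hne
      · -- both endpoints universal: use D
        have huD : u ∈ D := by simp [hDdef, hu]
        have hvD : v ∈ D := by simp [hDdef, hv]
        have h2 : 2 ≤ D.card := Finset.one_lt_card.mpr ⟨u, huD, v, hvD, hne⟩
        refine ⟨D, ⟨?_, huD, hvD⟩, ?_⟩
        · rw [hPdef, Finset.mem_union]
          left
          simp [h2]
        · rintro Q ⟨hQ, huQ, hvQ⟩
          rw [hPdef, Finset.mem_union] at hQ
          rcases hQ with hQ | hQ
          · by_cases h2' : 2 ≤ D.card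
            · simpa [h2'] using hQ
            · simp [h2'] at hQ
          · exfalso
            obtain ⟨s, w, hs, hadj', rfl⟩ := hmemE Q hQ
            simp only [Finset.mem_insert, Finset.mem_singleton] at huQ hvQ
            rcases huQ with rfl | rfl <;> rcases hvQ with rfl | rfl
            · exact hne rfl
            · exact hu hs
            · exact hv hs
            · exact hne rfl
  · -- cardinality bound
    have hEcard : E.card ≤ S.card * (n - 2) := by
      calc E.card ≤ ∑ s ∈ S, ((G.neighborFinset s).image
            (fun w => ({s, w} : Finset (Fin n)))).card := Finset.card_biUnion_le
        _ ≤ ∑ s ∈ S, (n - 2) := by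
            apply Finset.sum_le_sum
            intro s hs
            refine le_trans (Finset.card_image_le) ?_
            rw [SimpleGraph.card_neighborFinset_eq_degree]
            have h1 : G.degree s < Fintype.card (Fin n) := G.degree_lt_card_verts s
            rw [Fintype.card_fin] at h1
            have h2 : G.degree s ≠ n - 1 := by
              rw [hSdef] at hs
              exact (Finset.mem_filter.mp hs).2
            omega
        _ = S.card * (n - 2) := by rw [Finset.sum_const, smul_eq_mul]
    have hPcard : P.card ≤ 1 + E.card := by
      refine le_trans (Finset.card_union_le _ _) ?_
      gcongr
      split <;> simp
    by_cases hS0 : S = ∅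
    · have hE0 : E = ∅ := by rw [hEdef, hS0]; simp
      rcases Nat.lt_or_ge n 2 with hn2 | hn2
      · -- n = 1
        have hD1 : D.card < 2 := by
          have : D.card ≤ Fintype.card (Fin n) := Finset.card_le_univ D
          rw [Fintype.card_fin] at this
          omega
        have hP0 : P = ∅ := by
          rw [hPdef, hE0, if_neg (by omega)]
          simp
        rw [hP0]
        simp only [Finset.card_empty]
        have : 1 ≤ t * n := Nat.one_le_iff_ne_zero.mpr (by positivity)
        omega
      · have h1 : P.card ≤ 1 := by
          refine le_trans hPcard ?_
          rw [hE0]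
          simp
        have h2 : 2 ≤ t * n := le_trans (by omega) (Nat.mul_le_mul ht hn2)
        omega
    · have hn2 : 2 ≤ n := by
        by_contra hn2
        apply hS0
        have hn1 : n = 1 := by omega
        rw [hSdef]
        ext v
        simp only [Finset.mem_filter, Finset.mem_univ, true_and, Finset.notMem_empty,
          iff_false, not_not]
        have : G.degree v < Fintype.card (Fin n) := G.degree_lt_card_verts v
        rw [Fintype.card_fin] at this
        omega
      have hEt : E.card ≤ t * (n - 2) :=
        le_trans hEcard (Nat.mul_le_mul_right _ h)
      obtain ⟨m, rfl⟩ : ∃ m, n = m + 2 := ⟨n - 2, by omega⟩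
      have hm : (m + 2) - 2 = m := by omega
      rw [hm] at hEt
      have hmul : t * (m + 2) = t * m + 2 * t := by ring
      omega
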